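/- Let $0 < x_i < 1$ for $i = 1,\dots,m$ and $0 < y_j < 1$ for $j = 1,\dots,n$, and let $\phi(z) = \prod_{i=1}^m \frac{1+x_i z}{1-x_i z} \cdot \prod_{j=1}^n \frac{1+y_j z^{-1}}{1-y_j z^{-1}}$ on the unit circle $|z|=1$. Then $\sum_{k=1}^\infty k\,(\log\phi)_k\,(\log\phi)_{-k} = 2 \sum_{i=1}^m \sum_{j=1}^n \log\frac{1+x_i y_j}{1-x_i y_j}$, where $(\log\phi)_k$ denotes the $k$-th Fourier coefficient of $\log\phi$. -/

import Mathlib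

open Complex Real MeasureTheory intervalIntegral

/-- log series combined -/
lemma sz_logSeries {w : ℂ} (hw : ‖w‖ < 1) :
    HasSum (fun n : ℕ => (w ^ n - (-w) ^ n) / n)
      (Complex.log (1 + w) - Complex.log (1 - w)) := by
  have h1 := Complex.hasSum_taylorSeries_neg_log hw
  have h2 := Complex.hasSum_taylorSeries_neg_log (z := -w) (by simpa using hw)
  have := h1.sub h2
  simp only [sub_neg_eq_add] at this
  simpa [sub_div, neg_add_eq_sub] using this

lemma sz_one_add_ne {w : ℂ} (hw : ‖w‖ < 1) : 1 + w ≠ 0 := by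
  intro h
  have : w = -1 := by linear_combination h
  rw [this] at hw; simp at hw

lemma sz_one_sub_ne {w : ℂ} (hw : ‖w‖ < 1) : 1 - w ≠ 0 := by
  intro h
  have : w = 1 := by linear_combination -h
  rw [this] at hw; simp at hw

lemma sz_expL {w : ℂ} (hw : ‖w‖ < 1) :
    Complex.exp (Complex.log (1 + w) - Complex.log (1 - w)) = (1 + w) / (1 - w) := by
  rw [Complex.exp_sub, Complex.exp_log (sz_one_add_ne hw), Complex.exp_log (sz_one_sub_ne hw)]

/-- basic integral -/
lemma sz_integral_exp (m : ℤ) :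
    ∫ θ : ℝ in (0 : ℝ)..(2 * π), Complex.exp ((m : ℂ) * θ * I)
      = if m = 0 then ((2 * π : ℝ) : ℂ) else 0 := by
  rcases eq_or_ne m 0 with rfl | hm
  · simp
  · rw [if_neg hm]
    have hc : (m : ℂ) * I ≠ 0 := by
      simp [Complex.ext_iff, hm]
    have : ∀ θ : ℝ, (m : ℂ) * θ * I = (m : ℂ) * I * θ := by intro θ; ring
    simp_rw [this]
    rw [integral_exp_mul_complex hc]
    have h2 : (m : ℂ) * I * ((2 * π : ℝ) : ℂ) = m * (2 * π * I) := by push_cast; ring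
    rw [h2, Complex.exp_int_mul_two_pi_mul_I]
    simp

/-- norm of exp(r θ I) is 1 -/
lemma sz_norm_exp (r : ℝ) : ‖Complex.exp ((r : ℂ) * I)‖ = 1 := by
  simpa using Complex.abs_exp_ofReal_mul_I r

/-- coefficient extraction -/
lemma sz_coeff (a : ℤ → ℂ) (ha : Summable fun k => ‖a k‖) (k₀ : ℤ) :
    ∫ θ : ℝ in (0 : ℝ)..(2 * π),
        (∑' k : ℤ, a k * Complex.exp ((k : ℂ) * θ * I))
          * Complex.exp (((-k₀ : ℤ) : ℂ) * θ * I)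
      = ((2 * π : ℝ) : ℂ) * a k₀ := by
  have hpi : (0:ℝ) ≤ 2 * π := by positivity
  set F : ℤ → ℝ → ℂ := fun k θ => a k * Complex.exp (((k - k₀ : ℤ) : ℂ) * θ * I) with hF
  have hpt : ∀ θ : ℝ, (∑' k : ℤ, a k * Complex.exp ((k : ℂ) * θ * I))
      * Complex.exp (((-k₀ : ℤ) : ℂ) * θ * I) = ∑' k : ℤ, F k θ := by
    intro θ
    rw [← tsum_mul_right]
    congr 1; funext k
    rw [mul_assoc, ← Complex.exp_add]
    congr 2
    push_cast; ring
  have hnorm : ∀ (k : ℤ) (θ : ℝ), ‖F k θ‖ = ‖a k‖ := by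
    intro k θ
    have : ((k - k₀ : ℤ) : ℂ) * θ * I = ((((k - k₀ : ℤ) : ℝ) * θ : ℝ) : ℂ) * I := by
      push_cast; ring
    rw [hF]; simp only
    rw [norm_mul, this, sz_norm_exp, mul_one]
  have hcont : ∀ k : ℤ, Continuous (F k) := by
    intro k
    exact continuous_const.mul (Complex.continuous_exp.comp (by fun_prop))
  have hint : ∀ k : ℤ, Integrable (F k) (volume.restrict (Set.Ioc (0:ℝ) (2*π))) :=
    fun k => (hcont k).integrableOn_Ioc
  have hsum : Summable fun k : ℤ => ∫ θ in Set.Ioc (0:ℝ) (2*π), ‖F k θ‖ := by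
    have : (fun k : ℤ => ∫ θ in Set.Ioc (0:ℝ) (2*π), ‖F k θ‖)
        = fun k => ‖a k‖ * (2 * π) := by
      funext k
      simp_rw [hnorm k]
      rw [setIntegral_const]
      simp [Real.volume_Ioc, ENNReal.toReal_ofReal hpi, mul_comm]
      exact Or.inl Real.pi_nonneg
    rw [this]
    exact ha.mul_right _
  have key := MeasureTheory.integral_tsum_of_summable_integral_norm hint hsum
  calc ∫ θ : ℝ in (0 : ℝ)..(2 * π),
        (∑' k : ℤ, a k * Complex.exp ((k : ℂ) * θ * I))
          * Complex.exp (((-k₀ : ℤ) : ℂ) * θ * I)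
      = ∫ θ in Set.Ioc (0:ℝ) (2*π), ∑' k : ℤ, F k θ := by
        rw [intervalIntegral.integral_of_le hpi]
        exact setIntegral_congr_fun measurableSet_Ioc (fun θ _ => hpt θ)
    _ = ∑' k : ℤ, ∫ θ in Set.Ioc (0:ℝ) (2*π), F k θ := key.symm
    _ = ((2 * π : ℝ) : ℂ) * a k₀ := by
        have : ∀ k : ℤ, (∫ θ in Set.Ioc (0:ℝ) (2*π), F k θ)
            = if k = k₀ then ((2 * π : ℝ) : ℂ) * a k₀ else 0 := by
          intro k
          rw [← intervalIntegral.integral_of_le hpi]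
          rw [hF]; simp only
          rw [intervalIntegral.integral_const_mul, sz_integral_exp (k - k₀)]
          rcases eq_or_ne k k₀ with rfl | hk
          · simp [mul_comm]
          · rw [if_neg (sub_ne_zero.mpr hk), if_neg hk, mul_zero]
        simp_rw [this]
        exact tsum_ite_eq k₀ _

/-- continuity of the tsum -/
lemma sz_cont (a : ℤ → ℂ) (ha : Summable fun k => ‖a k‖) :
    Continuous fun θ : ℝ => ∑' k : ℤ, a k * Complex.exp ((k : ℂ) * θ * I) := by
  apply continuous_tsum (fun k => by fun_prop) ha
  intro k θ
  have : ((k : ℤ) : ℂ) * θ * I = ((((k : ℤ) : ℝ) * θ : ℝ) : ℂ) * I := by push_cast; ring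
  rw [norm_mul, this, sz_norm_exp, mul_one]

/-- a continuous function whose exponential is constantly 1 is constant -/
lemma sz_const {h : ℝ → ℂ} (hc : Continuous h) (he : ∀ θ, Complex.exp (h θ) = 1) :
    ∀ θ, h θ = h 0 := by
  choose n hn using fun θ => Complex.exp_eq_one_iff.mp (he θ)
  have hu : Continuous fun θ => (h θ).im := Complex.continuous_im.comp hc
  have him : ∀ θ, (h θ).im = n θ * (2 * π) := by
    intro θ; rw [hn θ]; simp [Complex.mul_im]
  have h2pi := Real.two_pi_pos
  have key : ∀ θ₁ θ₂ : ℝ, n θ₁ < n θ₂ → False := by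
    intro θ₁ θ₂ hlt
    set c : ℝ := ((n θ₁ : ℝ) + 1/2) * (2 * π) with hcdef
    have h1 : (n θ₁ : ℝ) + 1/2 ≤ (n θ₂ : ℝ) := by
      have : (n θ₁ : ℝ) + 1 ≤ (n θ₂ : ℝ) := by exact_mod_cast hlt
      linarith
    have hmem : c ∈ Set.uIcc ((h θ₁).im) ((h θ₂).im) := by
      rw [him θ₁, him θ₂]
      rw [Set.uIcc_of_le (by nlinarith : (n θ₁ : ℝ) * (2*π) ≤ (n θ₂ : ℝ) * (2*π))]
      constructor <;> nlinarith
    obtain ⟨θ', -, hθ'⟩ := intermediate_value_uIcc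
      (f := fun θ => (h θ).im) (a := θ₁) (b := θ₂) hu.continuousOn hmem
    have hθ'' : (n θ' : ℝ) * (2 * π) = c := by rw [← him θ']; exact hθ'
    have : (n θ' : ℝ) = (n θ₁ : ℝ) + 1/2 := by
      rw [hcdef] at hθ''
      nlinarith
    have h3 : ((2 * n θ' : ℤ) : ℝ) = ((2 * n θ₁ + 1 : ℤ) : ℝ) := by push_cast; linarith
    have := Int.cast_injective (α := ℝ) h3
    omega
  have hnn : ∀ θ, n θ = n 0 := by
    intro θ
    rcases lt_trichotomy (n θ) (n 0) with h | h | h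
    · exact absurd (key θ 0 h) id
    · exact h
    · exact absurd (key 0 θ h) id
  intro θ
  rw [hn θ, hn 0, hnn θ]

noncomputable def szCoef {m : ℕ} (x : Fin m → ℝ) (n : ℕ) : ℂ :=
  ∑ i, (((x i : ℂ)) ^ n - (-(x i : ℂ)) ^ n) / n

lemma szCoef_zero {m : ℕ} (x : Fin m → ℝ) : szCoef x 0 = 0 := by
  simp [szCoef]

lemma szCoef_hasSum {m : ℕ} {x : Fin m → ℝ} (hx : ∀ i, 0 < x i ∧ x i < 1)
    {ζ : ℂ} (hζ : ‖ζ‖ = 1) :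
    HasSum (fun n : ℕ => szCoef x n * ζ ^ n)
      (∑ i, (Complex.log (1 + x i * ζ) - Complex.log (1 - x i * ζ))) := by
  have hterm : ∀ n : ℕ, szCoef x n * ζ ^ n
      = ∑ i, (((x i : ℂ) * ζ) ^ n - (-((x i : ℂ) * ζ)) ^ n) / n := by
    intro n
    rw [szCoef, Finset.sum_mul]
    congr 1; funext i
    rw [div_mul_eq_mul_div, sub_mul, mul_pow, ← mul_pow]
    ring_nf
  have hw : ∀ i, ‖(x i : ℂ) * ζ‖ < 1 := by
    intro i
    rw [norm_mul, hζ, mul_one, Complex.norm_real, Real.norm_eq_abs,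
      abs_of_pos (hx i).1]
    exact (hx i).2
  have := hasSum_sum (f := fun i (n : ℕ) =>
      (((x i : ℂ) * ζ) ^ n - (-((x i : ℂ) * ζ)) ^ n) / n)
    (s := Finset.univ) (fun i _ => sz_logSeries (hw i))
  exact (funext hterm : _) ▸ this

lemma szCoef_norm_summable {m : ℕ} {x : Fin m → ℝ} (hx : ∀ i, 0 < x i ∧ x i < 1) :
    Summable fun n : ℕ => ‖szCoef x n‖ := by
  have hg : Summable fun n : ℕ => ∑ i : Fin m, 2 * (x i) ^ n := by
    apply summable_sum
    intro i _
    exact (summable_geometric_of_lt_one (le_of_lt (hx i).1) (hx i).2).mul_left 2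
  have hb : ∀ n : ℕ, ‖szCoef x n‖ ≤ ∑ i : Fin m, 2 * (x i) ^ n := by
    intro n
    refine (norm_sum_le _ _).trans (Finset.sum_le_sum fun i _ => ?_)
    have hxi := hx i
    rcases Nat.eq_zero_or_pos n with rfl | hn
    · simp
    · have hnorm : ‖(((x i : ℂ)) ^ n - (-(x i : ℂ)) ^ n) / (n:ℂ)‖
          ≤ (‖((x i : ℂ)) ^ n‖ + ‖(-(x i : ℂ)) ^ n‖) / n := by
        rw [norm_div]
        gcongr
        · exact norm_sub_le _ _
        · simp [Complex.norm_natCast]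
      refine hnorm.trans ?_
      have e1 : ‖((x i : ℂ)) ^ n‖ = (x i) ^ n := by
        rw [norm_pow, Complex.norm_real, Real.norm_eq_abs, abs_of_pos hxi.1]
      have e2 : ‖(-(x i : ℂ)) ^ n‖ = (x i) ^ n := by
        rw [norm_pow, norm_neg, Complex.norm_real, Real.norm_eq_abs, abs_of_pos hxi.1]
      rw [e1, e2]
      have hn1 : (1:ℝ) ≤ n := by exact_mod_cast hn
      have hx0 : (0:ℝ) ≤ (x i)^n := pow_nonneg hxi.1.le n
      have hx2 : (0:ℝ) ≤ (x i)^n + (x i)^n := add_nonneg hx0 hx0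
      calc ((x i)^n + (x i)^n) / n ≤ ((x i)^n + (x i)^n) / 1 :=
            div_le_div_of_nonneg_left hx2 one_pos hn1
        _ = 2 * (x i)^n := by ring
  exact Summable.of_nonneg_of_le (fun n => norm_nonneg _) hb hg

lemma sz_prod_pow (u v : ℂ) (m : ℕ) :
    (u ^ m - (-u) ^ m) * (v ^ m - (-v) ^ m) = 2 * ((u * v) ^ m - (-(u * v)) ^ m) := by
  have e1 : (-u) ^ m * (-v) ^ m = (u * v) ^ m := by rw [← mul_pow, neg_mul_neg]
  have e2 : u ^ m * (-v) ^ m = (-(u * v)) ^ m := by rw [← mul_pow, mul_neg]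
  have e3 : (-u) ^ m * v ^ m = (-(u * v)) ^ m := by rw [← mul_pow, neg_mul]
  have e4 : u ^ m * v ^ m = (u * v) ^ m := (mul_pow u v m).symm
  linear_combination e1 + e4 - e2 - e3

lemma sz_term {M N : ℕ} (x : Fin M → ℝ) (y : Fin N → ℝ) (n : ℕ) :
    ((n : ℂ) + 1) * szCoef x (n + 1) * szCoef y (n + 1)
      = ∑ i, ∑ j, 2 * ((((x i : ℂ) * (y j : ℂ)) ^ (n+1)
            - (-((x i : ℂ) * (y j : ℂ))) ^ (n+1)) / (n+1)) := by
  have hm : ((n : ℂ) + 1) ≠ 0 := by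
    exact_mod_cast Nat.cast_add_one_ne_zero (R := ℂ) n
  rw [szCoef, szCoef, mul_assoc, Finset.sum_mul_sum, Finset.mul_sum]
  congr 1; funext i
  rw [Finset.mul_sum]
  congr 1; funext j
  have hcast : ((n + 1 : ℕ) : ℂ) = (n : ℂ) + 1 := by push_cast; ring
  rw [hcast, div_mul_div_comm, sz_prod_pow]
  field_simp

lemma sz_final {M N : ℕ} (x : Fin M → ℝ) (y : Fin N → ℝ)
    (hx : ∀ i, 0 < x i ∧ x i < 1) (hy : ∀ j, 0 < y j ∧ y j < 1) :
    HasSum (fun n : ℕ => ((n : ℂ) + 1) * szCoef x (n + 1) * szCoef y (n + 1))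
      (((2 * ∑ i, ∑ j, Real.log ((1 + x i * y j) / (1 - x i * y j)) : ℝ) : ℂ)) := by
  have hxy : ∀ i j, 0 < x i * y j ∧ x i * y j < 1 := by
    intro i j
    constructor
    · exact mul_pos (hx i).1 (hy j).1
    · calc x i * y j < 1 * 1 := by
            apply mul_lt_mul' (hx i).2.le (hy j).2 (hy j).1.le one_pos
        _ = 1 := by ring
  have hterm := sz_term x y
  have hij : ∀ (i : Fin M) (j : Fin N),
      HasSum (fun n : ℕ => 2 * ((((x i : ℂ) * (y j : ℂ)) ^ (n+1)
            - (-((x i : ℂ) * (y j : ℂ))) ^ (n+1)) / (n+1)))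
        ((Real.log ((1 + x i * y j) / (1 - x i * y j)) : ℂ) * 2) := by
    intro i j
    set w : ℂ := (x i : ℂ) * (y j : ℂ) with hw
    have hwn : ‖w‖ < 1 := by
      rw [hw, ← Complex.ofReal_mul, Complex.norm_real, Real.norm_eq_abs,
        abs_of_pos (hxy i j).1]
      exact (hxy i j).2
    have h0 := sz_logSeries hwn
    have hsh : HasSum (fun n : ℕ => (w ^ (n+1) - (-w) ^ (n+1)) / (((n:ℂ)+1)))
        (Complex.log (1 + w) - Complex.log (1 - w)) := by
      have := (hasSum_nat_add_iff (f := fun n : ℕ => (w ^ n - (-w) ^ n) / n) 1).mpr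
        (by simpa using h0)
      convert this using 2 with n
      · rfl
      · push_cast; ring_nf
    have hL : ((Real.log ((1 + x i * y j) / (1 - x i * y j)) : ℝ) : ℂ)
        = Complex.log (1 + w) - Complex.log (1 - w) := by
      have h1 : (0:ℝ) < 1 + x i * y j := by nlinarith [(hxy i j).1]
      have h2 : (0:ℝ) < 1 - x i * y j := by nlinarith [(hxy i j).2]
      rw [Real.log_div h1.ne' h2.ne', Complex.ofReal_sub,
        Complex.ofReal_log h1.le, Complex.ofReal_log h2.le]
      rw [hw]
      push_cast
      ring_nf
    rw [hL, mul_comm]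
    exact hsh.mul_left 2
  have hsum2 : HasSum (fun n : ℕ => ∑ i, ∑ j, 2 * ((((x i : ℂ) * (y j : ℂ)) ^ (n+1)
            - (-((x i : ℂ) * (y j : ℂ))) ^ (n+1)) / (n+1)))
      (∑ i, ∑ j, ((Real.log ((1 + x i * y j) / (1 - x i * y j)) : ℝ) : ℂ) * 2) := by
    apply hasSum_sum
    intro i _
    apply hasSum_sum
    intro j _
    exact hij i j
  have hcast2 : (((2 * ∑ i, ∑ j, Real.log ((1 + x i * y j) / (1 - x i * y j)) : ℝ)) : ℂ)
      = ∑ i, ∑ j, ((Real.log ((1 + x i * y j) / (1 - x i * y j)) : ℝ) : ℂ) * 2 := by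
    push_cast
    rw [Finset.mul_sum]
    refine Finset.sum_congr rfl fun i _ => ?_
    rw [Finset.mul_sum]
    exact Finset.sum_congr rfl fun j _ => mul_comm _ _
  rw [hcast2]
  exact hsum2.congr_fun fun n => hterm n

/-- Let `φ(z) = ∏ᵢ (1+xᵢz)/(1-xᵢz) · ∏ⱼ (1+yⱼ/z)/(1-yⱼ/z)` on the
unit circle, and let `a : ℤ → ℂ` be the Fourier coefficients of `log φ`
(encoded by: `a` is absolutely summable and `exp(∑ₖ aₖ e^{ikθ}) = φ(e^{iθ})`
for all real `θ`). Then `∑_{k ≥ 1} k a_k a_{-k} = 2 ∑ᵢ∑ⱼ log((1+xᵢyⱼ)/(1-xᵢyⱼ))`. -/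
theorem szego_constant_for_phi {M N : ℕ} (x : Fin M → ℝ) (y : Fin N → ℝ)
    (hx : ∀ i, 0 < x i ∧ x i < 1) (hy : ∀ j, 0 < y j ∧ y j < 1)
    (a : ℤ → ℂ) (ha : Summable fun k => ‖a k‖)
    (hlog : ∀ θ : ℝ,
      Complex.exp (∑' k : ℤ, a k * Complex.exp ((k : ℂ) * (θ : ℂ) * Complex.I))
        = (∏ i, (1 + (x i : ℂ) * Complex.exp ((θ : ℂ) * Complex.I))
              / (1 - (x i : ℂ) * Complex.exp ((θ : ℂ) * Complex.I)))
          * ∏ j, (1 + (y j : ℂ) * (Complex.exp ((θ : ℂ) * Complex.I))⁻¹)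
              / (1 - (y j : ℂ) * (Complex.exp ((θ : ℂ) * Complex.I))⁻¹)) :
    ∑' k : ℕ, ((k : ℂ) + 1) * a ((k : ℤ) + 1) * a (-((k : ℤ) + 1))
      = ((2 * ∑ i, ∑ j, Real.log ((1 + x i * y j) / (1 - x i * y j)) : ℝ) : ℂ) := by
  classical
  -- the reference coefficients
  set b : ℤ → ℂ := fun k => if 0 < k then szCoef x k.toNat else szCoef y (-k).toNat
    with hbdef
  have hbnat : ∀ n : ℕ, b (n : ℤ) = szCoef x n := by
    intro n
    cases n with
    | zero => simp [hbdef, szCoef_zero]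
    | succ n =>
      rw [hbdef]
      simp only
      rw [if_pos (by positivity)]
      congr 1
  have hbneg : ∀ n : ℕ, b (-((n : ℤ) + 1)) = szCoef y (n + 1) := by
    intro n
    rw [hbdef]
    simp only
    rw [if_neg (by omega)]
    congr 1
  -- summability of b
  have hb : Summable fun k : ℤ => ‖b k‖ := by
    apply Summable.of_nat_of_neg_add_one
    · exact (szCoef_norm_summable hx).congr fun n => by rw [hbnat n]
    · refine ((summable_nat_add_iff 1).mpr (szCoef_norm_summable hy)).congr fun n => ?_
      rw [hbneg n]
  -- the two functions
  set f : ℝ → ℂ := fun θ => ∑' k : ℤ, a k * Complex.exp ((k : ℂ) * θ * Complex.I)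
    with hfdef
  set g : ℝ → ℂ := fun θ => ∑' k : ℤ, b k * Complex.exp ((k : ℂ) * θ * Complex.I)
    with hgdef
  -- HasSum for g
  have hgsum : ∀ θ : ℝ,
      HasSum (fun k : ℤ => b k * Complex.exp ((k : ℂ) * θ * Complex.I))
        ((∑ i, (Complex.log (1 + (x i : ℂ) * Complex.exp ((θ : ℂ) * Complex.I))
            - Complex.log (1 - (x i : ℂ) * Complex.exp ((θ : ℂ) * Complex.I))))
         + (∑ j, (Complex.log (1 + (y j : ℂ) * (Complex.exp ((θ : ℂ) * Complex.I))⁻¹)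
            - Complex.log (1 - (y j : ℂ) * (Complex.exp ((θ : ℂ) * Complex.I))⁻¹)))) := by
    intro θ
    set ζ : ℂ := Complex.exp ((θ : ℂ) * Complex.I) with hζdef
    have hζ : ‖ζ‖ = 1 := sz_norm_exp θ
    have hζ' : ‖ζ⁻¹‖ = 1 := by rw [norm_inv, hζ]; norm_num
    apply HasSum.of_nat_of_neg_add_one
    · have h1 := szCoef_hasSum hx hζ
      refine h1.congr_fun fun n => ?_
      rw [hbnat n]
      congr 1
      rw [hζdef, ← Complex.exp_nat_mul]
      congr 1
      push_cast
      ring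
    · have h2 := szCoef_hasSum hy hζ'
      have h3 : HasSum (fun n : ℕ => szCoef y (n + 1) * (ζ⁻¹) ^ (n + 1))
          (∑ j, (Complex.log (1 + (y j : ℂ) * ζ⁻¹) - Complex.log (1 - (y j : ℂ) * ζ⁻¹))) := by
        refine (hasSum_nat_add_iff (f := fun n : ℕ => szCoef y n * (ζ⁻¹) ^ n) 1).mpr ?_
        simpa [szCoef_zero] using h2
      refine h3.congr_fun fun n => ?_
      rw [hbneg n]
      congr 1
      rw [inv_pow, hζdef, ← Complex.exp_nat_mul, ← Complex.exp_neg]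
      congr 1
      push_cast
      ring
  -- exp g = φ
  have hexpg : ∀ θ : ℝ, Complex.exp (g θ)
      = (∏ i, (1 + (x i : ℂ) * Complex.exp ((θ : ℂ) * Complex.I))
              / (1 - (x i : ℂ) * Complex.exp ((θ : ℂ) * Complex.I)))
          * ∏ j, (1 + (y j : ℂ) * (Complex.exp ((θ : ℂ) * Complex.I))⁻¹)
              / (1 - (y j : ℂ) * (Complex.exp ((θ : ℂ) * Complex.I))⁻¹) := by
    intro θ
    have hgθ := (hgsum θ).tsum_eq
    rw [hgdef]
    simp only
    rw [hgθ, Complex.exp_add, Complex.exp_sum, Complex.exp_sum]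
    have hζ : ‖Complex.exp ((θ : ℂ) * Complex.I)‖ = 1 := sz_norm_exp θ
    congr 1
    · refine Finset.prod_congr rfl fun i _ => ?_
      apply sz_expL
      rw [norm_mul, hζ, mul_one, Complex.norm_real, Real.norm_eq_abs, abs_of_pos (hx i).1]
      exact (hx i).2
    · refine Finset.prod_congr rfl fun j _ => ?_
      apply sz_expL
      rw [norm_mul, norm_inv, hζ, inv_one, mul_one, Complex.norm_real, Real.norm_eq_abs,
        abs_of_pos (hy j).1]
      exact (hy j).2
  -- f - g is constant
  have hone : ∀ θ : ℝ, Complex.exp (f θ - g θ) = 1 := by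
    intro θ
    rw [Complex.exp_sub, hfdef]
    simp only
    rw [hlog θ, ← hexpg θ]
    exact div_self (Complex.exp_ne_zero _)
  have hfc : Continuous f := sz_cont a ha
  have hgc : Continuous g := sz_cont b hb
  have hconst := sz_const (hfc.sub hgc) hone
  -- coefficients agree away from 0
  have hab : ∀ k₀ : ℤ, k₀ ≠ 0 → a k₀ = b k₀ := by
    intro k₀ hk₀
    have h1 := sz_coeff a ha k₀
    have h2 := sz_coeff b hb k₀
    set c : ℂ := f 0 - g 0 with hcdef
    have hfg : ∀ θ : ℝ, f θ = g θ + c := by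
      intro θ
      have := hconst θ
      simp only [Pi.sub_apply] at this
      rw [hcdef]
      linear_combination this
    have hint1 : IntervalIntegrable
        (fun θ : ℝ => g θ * Complex.exp (((-k₀ : ℤ) : ℂ) * θ * Complex.I))
        MeasureTheory.volume 0 (2 * Real.pi) := by
      apply Continuous.intervalIntegrable
      exact hgc.mul (by fun_prop)
    have hint2 : IntervalIntegrable
        (fun θ : ℝ => c * Complex.exp (((-k₀ : ℤ) : ℂ) * θ * Complex.I))
        MeasureTheory.volume 0 (2 * Real.pi) := by
      apply Continuous.intervalIntegrable
      fun_prop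
    have key : ((2 * Real.pi : ℝ) : ℂ) * a k₀ = ((2 * Real.pi : ℝ) : ℂ) * b k₀ := by
      rw [← h1, ← h2]
      calc ∫ θ : ℝ in (0 : ℝ)..(2 * Real.pi),
            f θ * Complex.exp (((-k₀ : ℤ) : ℂ) * θ * Complex.I)
          = ∫ θ : ℝ in (0 : ℝ)..(2 * Real.pi),
            (g θ * Complex.exp (((-k₀ : ℤ) : ℂ) * θ * Complex.I)
              + c * Complex.exp (((-k₀ : ℤ) : ℂ) * θ * Complex.I)) := by
            apply intervalIntegral.integral_congr
            intro θ _
            simp only [hfg θ]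
            ring
        _ = (∫ θ : ℝ in (0 : ℝ)..(2 * Real.pi),
              g θ * Complex.exp (((-k₀ : ℤ) : ℂ) * θ * Complex.I))
            + ∫ θ : ℝ in (0 : ℝ)..(2 * Real.pi),
              c * Complex.exp (((-k₀ : ℤ) : ℂ) * θ * Complex.I) :=
            intervalIntegral.integral_add hint1 hint2
        _ = ∫ θ : ℝ in (0 : ℝ)..(2 * Real.pi),
              g θ * Complex.exp (((-k₀ : ℤ) : ℂ) * θ * Complex.I) := by
            rw [intervalIntegral.integral_const_mul, sz_integral_exp (-k₀),
              if_neg (by omega : ¬ -k₀ = 0), mul_zero, add_zero]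
    have h2pi : ((2 * Real.pi : ℝ) : ℂ) ≠ 0 := by
      rw [Complex.ofReal_ne_zero]
      exact (Real.two_pi_pos).ne'
    exact mul_left_cancel₀ h2pi key
  -- finish
  have hfun : ∀ k : ℕ, ((k : ℂ) + 1) * a ((k : ℤ) + 1) * a (-((k : ℤ) + 1))
      = ((k : ℂ) + 1) * szCoef x (k + 1) * szCoef y (k + 1) := by
    intro k
    have e1 : a ((k : ℤ) + 1) = szCoef x (k + 1) := by
      rw [hab _ (by omega)]
      have : ((k : ℤ) + 1) = ((k + 1 : ℕ) : ℤ) := by push_cast; ring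
      rw [this, hbnat]
    have e2 : a (-((k : ℤ) + 1)) = szCoef y (k + 1) := by
      rw [hab _ (by omega)]
      exact hbneg k
    rw [e1, e2]
  calc ∑' k : ℕ, ((k : ℂ) + 1) * a ((k : ℤ) + 1) * a (-((k : ℤ) + 1))
      = ∑' k : ℕ, ((k : ℂ) + 1) * szCoef x (k + 1) * szCoef y (k + 1) := by
        exact tsum_congr hfun
    _ = ((2 * ∑ i, ∑ j, Real.log ((1 + x i * y j) / (1 - x i * y j)) : ℝ) : ℂ) :=
        (sz_final x y hx hy).tsum_eq
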